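/- The map φ from Q_n to K_n = k[v_1,...,v_n]/(v_i² + v_i : 1 ≤ i ≤ n) defined on generators by φ(z_{A,i}) = w_i · ∏_{j∈A}(1 + w_j), where w_i = v_i mod the ideal, is a well-defined algebra homomorphism. -/

import Mathlib

namespace QnPaper

/-- The defining relations of the quadratic algebra `Q_n`:
for `A ⊆ {1,…,n}` and distinct `i, j ∉ A`,
`z_{A∪{i},j} + z_{A,i} = z_{A∪{j},i} + z_{A,j}` and
`z_{A∪{i},j} * z_{A,i} = z_{A∪{j},i} * z_{A,j}`. -/
inductive QRel (k : Type) [Field k] (n : ℕ) :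
    FreeAlgebra k (Finset (Fin n) × Fin n) → FreeAlgebra k (Finset (Fin n) × Fin n) → Prop
  | add_rel (A : Finset (Fin n)) (i j : Fin n) (hi : i ∉ A) (hj : j ∉ A) (hij : i ≠ j) :
      QRel k n (FreeAlgebra.ι k (insert i A, j) + FreeAlgebra.ι k (A, i))
        (FreeAlgebra.ι k (insert j A, i) + FreeAlgebra.ι k (A, j))
  | mul_rel (A : Finset (Fin n)) (i j : Fin n) (hi : i ∉ A) (hj : j ∉ A) (hij : i ≠ j) :
      QRel k n (FreeAlgebra.ι k (insert i A, j) * FreeAlgebra.ι k (A, i))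
        (FreeAlgebra.ι k (insert j A, i) * FreeAlgebra.ι k (A, j))

/-- The quadratic algebra `Q_n`. -/
abbrev Q (k : Type) [Field k] (n : ℕ) := RingQuot (QRel k n)

/-- The generator `z_{A,i}` of `Q_n` (only meaningful when `i ∉ A`). -/
def z (k : Type) [Field k] (n : ℕ) (A : Finset (Fin n)) (i : Fin n) : Q k n :=
  RingQuot.mkAlgHom k (QRel k n) (FreeAlgebra.ι k (A, i))
/-- The ideal generated by the elements `v i ^ 2 + v i`. -/
noncomputable def In (k : Type) [Field k] (n : ℕ) : Ideal (MvPolynomial (Fin n) k) :=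
  Ideal.span (Set.range fun i : Fin n =>
    (MvPolynomial.X i ^ 2 + MvPolynomial.X i : MvPolynomial (Fin n) k))

/-- The commutative algebra `K n`, polynomials modulo the ideal of the `v i ^ 2 + v i`. -/
abbrev Kn (k : Type) [Field k] (n : ℕ) := MvPolynomial (Fin n) k ⧸ In k n

/-- The image `w i` of `v i` in `K n`. -/
noncomputable def w (k : Type) [Field k] (n : ℕ) (i : Fin n) : Kn k n :=
  Ideal.Quotient.mk (In k n) (MvPolynomial.X i)
/-- There is a well-defined algebra homomorphism from `Q n` to `K n` sending each
generator (with `i ∉ A`) to `w i * ∏_{j ∈ A} (1 + w j)`. -/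
theorem stmt3 (k : Type) [Field k] (n : ℕ) :
    ∃ φ : Q k n →ₐ[k] Kn k n,
      ∀ (A : Finset (Fin n)) (i : Fin n), i ∉ A →
        φ (z k n A i) = w k n i * ∏ j ∈ A, (1 + w k n j) := by
  have hw : ∀ i : Fin n, w k n i ^ 2 + w k n i = 0 := by
    intro i
    have h0 : Ideal.Quotient.mk (In k n)
        (MvPolynomial.X i ^ 2 + MvPolynomial.X i) = 0 :=
      Ideal.Quotient.eq_zero_iff_mem.mpr (Ideal.subset_span ⟨i, rfl⟩)
    rw [RingHom.map_add, RingHom.map_pow] at h0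
    exact h0
  let F : FreeAlgebra k (Finset (Fin n) × Fin n) →ₐ[k] Kn k n :=
    FreeAlgebra.lift k (fun p => w k n p.2 * ∏ j ∈ p.1, (1 + w k n j))
  have hrel : ∀ ⦃a b⦄, QRel k n a b → F a = F b := by
    intro a b h
    induction h with
    | add_rel A i j hi hj hij =>
      simp only [F, map_add, map_mul, FreeAlgebra.lift_ι_apply,
        Finset.prod_insert hi, Finset.prod_insert hj]
      ring
    | mul_rel A i j hi hj hij =>
      simp only [F, map_add, map_mul, FreeAlgebra.lift_ι_apply,
        Finset.prod_insert hi, Finset.prod_insert hj]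
      set P := ∏ j ∈ A, (1 + w k n j)
      linear_combination (w k n j * P ^ 2) * hw i - (w k n i * P ^ 2) * hw j
  refine ⟨RingQuot.liftAlgHom k ⟨F, hrel⟩, ?_⟩
  intro A i hi
  rw [z, RingQuot.liftAlgHom_mkAlgHom_apply]
  simp [F]
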